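/- For every irrational real number α one has 𝔨*(α) ≥ 𝔨(α) ≥ 2·λ(α). -/

import Mathlib

open Filter Real Set

/-- Iterates of the Gauss map starting from `α`: `x₀ = α`, `x_{n+1} = 1 / fract (xₙ)`. -/
noncomputable def gaussIter (α : ℝ) : ℕ → ℝ
  | 0 => α
  | n + 1 => (Int.fract (gaussIter α n))⁻¹

/-- Partial quotients of the continued fraction `α = [a₀; a₁, a₂, …]`. -/
noncomputable def cfA (α : ℝ) (n : ℕ) : ℤ := ⌊gaussIter α n⌋

/-- Denominators of convergents, with shifted index: `cfQ α 0 = q₋₁ = 0`,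
`cfQ α 1 = q₀ = 1`, and `cfQ α (n+1) = qₙ` where `qₙ = aₙ q_{n-1} + q_{n-2}`. -/
noncomputable def cfQ (α : ℝ) : ℕ → ℤ
  | 0 => 0
  | 1 => 1
  | n + 2 => cfA α (n + 1) * cfQ α (n + 1) + cfQ α n

/-- Numerators of convergents, with shifted index: `cfP α 0 = p₋₁ = 1`,
`cfP α 1 = p₀ = ⌊α⌋`, and `cfP α (n+1) = pₙ` where `pₙ = aₙ p_{n-1} + p_{n-2}`. -/
noncomputable def cfP (α : ℝ) : ℕ → ℤ
  | 0 => 1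
  | 1 => ⌊α⌋
  | n + 2 => cfA α (n + 1) * cfP α (n + 1) + cfP α n

/-- `qₙ`, the denominator of the `n`-th convergent of `α`. -/
noncomputable def cfDen (α : ℝ) (n : ℕ) : ℤ := cfQ α (n + 1)

/-- `pₙ`, the numerator of the `n`-th convergent of `α`. -/
noncomputable def cfNum (α : ℝ) (n : ℕ) : ℤ := cfP α (n + 1)

/-- `ξₙ = |qₙ α − pₙ|`. -/
noncomputable def cfXi (α : ℝ) (n : ℕ) : ℝ := |(cfDen α n : ℝ) * α - (cfNum α n : ℝ)|


/- ===== auxiliary development (part A) ===== -/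
noncomputable def thetaCF (α : ℝ) (n : ℕ) : ℝ := (cfQ α n : ℝ) * α - (cfP α n : ℝ)

lemma gaussIter_succ (α : ℝ) (n : ℕ) :
    gaussIter α (n + 1) = (Int.fract (gaussIter α n))⁻¹ := rfl

lemma irrational_gaussIter {α : ℝ} (hα : Irrational α) : ∀ n, Irrational (gaussIter α n)
  | 0 => hα
  | n + 1 => by
    have ih := irrational_gaussIter hα n
    have h1 : Irrational (Int.fract (gaussIter α n)) := by
      simpa [Int.fract, sub_eq_add_neg] using ih.sub_intCast ⌊gaussIter α n⌋
    rw [gaussIter_succ]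
    exact h1.inv

lemma fract_pos {α : ℝ} (hα : Irrational α) (n : ℕ) : 0 < Int.fract (gaussIter α n) := by
  have h1 : Irrational (Int.fract (gaussIter α n)) := by
    simpa [Int.fract, sub_eq_add_neg] using (irrational_gaussIter hα n).sub_intCast ⌊gaussIter α n⌋
  exact lt_of_le_of_ne (Int.fract_nonneg _) (Ne.symm h1.ne_zero)

lemma one_lt_gaussIter {α : ℝ} (hα : Irrational α) (n : ℕ) : 1 < gaussIter α (n + 1) := by
  rw [gaussIter_succ]
  exact (one_lt_inv₀ (fract_pos hα n)).2 (Int.fract_lt_one _)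

lemma gaussIter_pos {α : ℝ} (hα : Irrational α) (n : ℕ) : 0 < gaussIter α (n + 1) :=
  lt_trans one_pos (one_lt_gaussIter hα n)

lemma cfA_one_le {α : ℝ} (hα : Irrational α) (n : ℕ) : 1 ≤ cfA α (n + 1) := by
  rw [cfA, Int.le_floor]
  exact_mod_cast (one_lt_gaussIter hα n).le

lemma theta_zero (α : ℝ) : thetaCF α 0 = -1 := by
  rw [thetaCF, show cfQ α 0 = 0 from rfl, show cfP α 0 = 1 from rfl]; push_cast; ring

lemma theta_rec (α : ℝ) (n : ℕ) :
    thetaCF α (n + 2) = (cfA α (n+1) : ℝ) * thetaCF α (n+1) + thetaCF α n := by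
  simp only [thetaCF, show cfQ α (n+2) = cfA α (n + 1) * cfQ α (n + 1) + cfQ α n from rfl,
    show cfP α (n+2) = cfA α (n + 1) * cfP α (n + 1) + cfP α n from rfl]
  push_cast
  ring

lemma theta_succ {α : ℝ} (hα : Irrational α) (n : ℕ) :
    thetaCF α (n + 1) * gaussIter α (n + 1) = -thetaCF α n := by
  induction n with
  | zero =>
    have h1 : 0 < Int.fract α := fract_pos hα 0
    have e1 : thetaCF α 1 = Int.fract α := by
      rw [thetaCF, show cfQ α 1 = 1 from rfl, show cfP α 1 = ⌊α⌋ from rfl, Int.fract]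
      push_cast; ring
    rw [e1, theta_zero, gaussIter_succ]
    have : Int.fract (gaussIter α 0) = Int.fract α := rfl
    rw [this]
    field_simp
  | succ n ih =>
    have hx : gaussIter α (n + 1) ≠ 0 := (gaussIter_pos hα n).ne'
    have hTn : thetaCF α n = -(thetaCF α (n+1) * gaussIter α (n+1)) := by rw [ih]; ring
    have hfr : Int.fract (gaussIter α (n+1)) = gaussIter α (n+1) - (cfA α (n+1) : ℝ) := by
      rw [Int.fract, cfA]
    have hfr_pos : 0 < Int.fract (gaussIter α (n+1)) := fract_pos hα (n+1)
    have hg2 : gaussIter α (n + 2) = (gaussIter α (n+1) - (cfA α (n+1) : ℝ))⁻¹ := by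
      rw [gaussIter_succ α (n+1), hfr]
    have hne : gaussIter α (n+1) - (cfA α (n+1) : ℝ) ≠ 0 := by
      rw [← hfr]; exact hfr_pos.ne'
    rw [theta_rec, hTn, hg2]
    field_simp
    ring

lemma theta_ne_zero {α : ℝ} (hα : Irrational α) : ∀ n, thetaCF α n ≠ 0
  | 0 => by rw [theta_zero]; norm_num
  | n + 1 => by
    have h := theta_succ hα n
    intro h0
    rw [h0, zero_mul] at h
    exact theta_ne_zero hα n (by linarith [h.symm] : thetaCF α n = 0)

/-- Sign alternation: Θ_n = (-1)^(n+1) |Θ_n|. -/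
lemma theta_sign {α : ℝ} (hα : Irrational α) : ∀ n, 0 < (-1 : ℝ)^(n+1) * thetaCF α n
  | 0 => by rw [theta_zero]; norm_num
  | n + 1 => by
    have ih := theta_sign hα n
    have h := theta_succ hα n
    have hx : 0 < gaussIter α (n+1) := gaussIter_pos hα n
    have : thetaCF α (n+1) = -thetaCF α n / gaussIter α (n+1) := by
      field_simp at h ⊢; linarith [h]
    rw [this]
    have hpow : ((-1:ℝ))^(n+1+1) = -(-1:ℝ)^(n+1) := by ring
    rw [hpow]
    have : -(-1:ℝ) ^ (n + 1) * (-thetaCF α n / gaussIter α (n + 1))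
        = ((-1:ℝ)^(n+1) * thetaCF α n) / gaussIter α (n+1) := by ring
    rw [this]
    positivity

lemma theta_eq_sign_abs {α : ℝ} (hα : Irrational α) (n : ℕ) :
    thetaCF α n = (-1 : ℝ)^(n+1) * |thetaCF α n| := by
  have h := theta_sign hα n
  rcases Nat.even_or_odd (n+1) with he | ho
  · have hpos : 0 < thetaCF α n := by rw [he.neg_one_pow, one_mul] at h; exact h
    rw [he.neg_one_pow, one_mul, abs_of_pos hpos]
  · have hneg : thetaCF α n < 0 := by rw [ho.neg_one_pow] at h; linarith
    rw [ho.neg_one_pow, abs_of_neg hneg]; ring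

lemma abs_theta_pos {α : ℝ} (hα : Irrational α) (n : ℕ) : 0 < |thetaCF α n| :=
  abs_pos.2 (theta_ne_zero hα n)

lemma abs_theta_succ_lt {α : ℝ} (hα : Irrational α) (n : ℕ) :
    |thetaCF α (n+1)| < |thetaCF α n| := by
  have h := theta_succ hα n
  have hx : 1 < gaussIter α (n+1) := one_lt_gaussIter hα n
  have h2 : |thetaCF α (n+1) * gaussIter α (n+1)| = |thetaCF α n| := by rw [h, abs_neg]
  rw [abs_mul, abs_of_pos (by linarith : (0:ℝ) < gaussIter α (n+1))] at h2
  nlinarith [abs_theta_pos hα (n+1)]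

lemma abs_theta_antitone {α : ℝ} (hα : Irrational α) {m n : ℕ} (h : m ≤ n) :
    |thetaCF α n| ≤ |thetaCF α m| := by
  induction n with
  | zero => simp_all
  | succ n ih =>
    rcases Nat.lt_or_ge m (n+1) with h' | h'
    · exact le_trans (abs_theta_succ_lt hα n).le (ih (Nat.lt_succ_iff.mp h'))
    · have : m = n + 1 := le_antisymm h h'
      rw [this]

/-- |Θ_n| = a_{n+1} |Θ_{n+1}| + |Θ_{n+2}| -/
lemma abs_theta_rec {α : ℝ} (hα : Irrational α) (n : ℕ) :
    |thetaCF α n| = (cfA α (n+1) : ℝ) * |thetaCF α (n+1)| + |thetaCF α (n+2)| := by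
  have h := theta_rec α n
  have e0 := theta_eq_sign_abs hα n
  have e1 := theta_eq_sign_abs hα (n+1)
  have e2 := theta_eq_sign_abs hα (n+2)
  have hp : ((-1:ℝ))^(n+1+1) = -(-1:ℝ)^(n+1) := by ring
  have hp2 : ((-1:ℝ))^(n+2+1) = (-1:ℝ)^(n+1) := by ring
  rw [e0, e1, e2, hp, hp2] at h
  rcases Nat.even_or_odd (n+1) with he | ho
  · rw [he.neg_one_pow] at h; linarith
  · rw [ho.neg_one_pow] at h; linarith

lemma cf_det {α : ℝ} : ∀ n : ℕ, cfP α n * cfQ α (n+1) - cfP α (n+1) * cfQ α n = (-1)^n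
  | 0 => by
    rw [show cfP α 0 = 1 from rfl, show cfQ α 1 = 1 from rfl, show cfQ α 0 = 0 from rfl]
    ring
  | n + 1 => by
    have ih := cf_det (α := α) n
    rw [show cfP α (n+2) = cfA α (n + 1) * cfP α (n + 1) + cfP α n from rfl,
        show cfQ α (n+2) = cfA α (n + 1) * cfQ α (n + 1) + cfQ α n from rfl]
    have : (-1 : ℤ)^(n+1) = -(-1:ℤ)^n := by ring
    rw [this, ← ih]
    ring

/-- Key identity: q_{n+1} |Θ_n| + q_n |Θ_{n+1}| = 1 (shifted indices). -/
lemma cf_identity {α : ℝ} (hα : Irrational α) (n : ℕ) :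
    (cfQ α (n+1) : ℝ) * |thetaCF α n| + (cfQ α n : ℝ) * |thetaCF α (n+1)| = 1 := by
  have hdet := cf_det (α := α) n
  have hlin : (cfQ α (n+1) : ℝ) * thetaCF α n - (cfQ α n : ℝ) * thetaCF α (n+1)
      = -((cfP α n : ℝ) * (cfQ α (n+1) : ℝ) - (cfP α (n+1) : ℝ) * (cfQ α n : ℝ)) := by
    rw [thetaCF, thetaCF]; ring
  have hdetR : (cfP α n : ℝ) * (cfQ α (n+1) : ℝ) - (cfP α (n+1) : ℝ) * (cfQ α n : ℝ)
      = (-1:ℝ)^n := by exact_mod_cast congrArg (fun z : ℤ => (z : ℝ)) hdet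
  rw [hdetR] at hlin
  have e0 := theta_eq_sign_abs hα n
  have e1 := theta_eq_sign_abs hα (n+1)
  rw [e0, e1] at hlin
  have hp : ((-1:ℝ))^(n+1+1) = -(-1:ℝ)^(n+1) := by ring
  have hp2 : ((-1:ℝ))^(n+1) = -(-1:ℝ)^n := by ring
  rw [hp, hp2] at hlin
  rcases Nat.even_or_odd n with he | ho
  · rw [he.neg_one_pow] at hlin; linarith
  · rw [ho.neg_one_pow] at hlin; linarith

lemma cfQ_nonneg {α : ℝ} (hα : Irrational α) : ∀ n, 0 ≤ cfQ α n
  | 0 => le_refl _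
  | 1 => by norm_num [show cfQ α 1 = 1 from rfl]
  | n + 2 => by
    rw [show cfQ α (n+2) = cfA α (n + 1) * cfQ α (n + 1) + cfQ α n from rfl]
    have h1 := cfQ_nonneg hα (n+1)
    have h2 := cfQ_nonneg hα n
    have h3 := cfA_one_le hα n
    nlinarith

lemma cfQ_pos {α : ℝ} (hα : Irrational α) : ∀ n, 1 ≤ cfQ α (n + 1)
  | 0 => le_refl _
  | n + 1 => by
    rw [show cfQ α (n+2) = cfA α (n + 1) * cfQ α (n + 1) + cfQ α n from rfl]
    have h1 := cfQ_pos hα n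
    have h2 := cfQ_nonneg hα n
    have h3 := cfA_one_le hα n
    nlinarith

lemma cfQ_le_succ {α : ℝ} (hα : Irrational α) : ∀ n, cfQ α n ≤ cfQ α (n + 1)
  | 0 => by norm_num [show cfQ α 1 = 1 from rfl, show cfQ α 0 = 0 from rfl]
  | n + 1 => by
    rw [show cfQ α (n+2) = cfA α (n + 1) * cfQ α (n + 1) + cfQ α n from rfl]
    have h1 := cfQ_pos hα n
    have h2 := cfQ_nonneg hα n
    have h3 := cfA_one_le hα n
    nlinarith

lemma cfQ_mono {α : ℝ} (hα : Irrational α) : Monotone (cfQ α) :=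
  monotone_nat_of_le_succ (cfQ_le_succ hα)

/-- strict increase from index 2 on -/
lemma cfQ_strict {α : ℝ} (hα : Irrational α) (n : ℕ) : cfQ α (n+2) < cfQ α (n+3) := by
  rw [show cfQ α (n+3) = cfA α (n + 2) * cfQ α (n + 2) + cfQ α (n+1) from rfl]
  have h1 := cfQ_pos hα n
  have h2 := cfQ_pos hα (n+1)
  have h3 := cfA_one_le hα (n+1)
  nlinarith

lemma cfDen_pos {α : ℝ} (hα : Irrational α) (n : ℕ) : 1 ≤ cfDen α n := cfQ_pos hα n

lemma cfDen_mono {α : ℝ} (hα : Irrational α) {m n : ℕ} (h : m ≤ n) : cfDen α m ≤ cfDen α n :=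
  cfQ_mono hα (by omega)

lemma cfDen_strict {α : ℝ} (hα : Irrational α) (n : ℕ) : cfDen α (n+1) < cfDen α (n+2) :=
  cfQ_strict hα n

lemma cfQ_growth {α : ℝ} (hα : Irrational α) : ∀ n : ℕ, (n : ℤ) ≤ 2 * cfQ α (n + 1)
  | 0 => by norm_num [show cfQ α 1 = 1 from rfl]
  | 1 => by
    have := cfQ_pos hα 1
    omega
  | n + 2 => by
    have ih := cfQ_growth hα (n+1)
    have h1 := cfQ_pos hα n
    have h3 := cfA_one_le hα (n+1)
    have h2 := cfQ_pos hα (n+1)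
    rw [show cfQ α (n+3) = cfA α (n + 2) * cfQ α (n + 2) + cfQ α (n+1) from rfl]
    push_cast at ih ⊢
    nlinarith [mul_le_mul_of_nonneg_right h3 (by linarith : (0:ℤ) ≤ cfQ α (n+2))]

lemma exists_level {α : ℝ} (hα : Irrational α) (q : ℤ) (hq : 1 ≤ q) :
    ∃ N : ℕ, cfDen α N ≤ q ∧ q < cfDen α (N + 1) := by
  have hex : ∃ n : ℕ, q < cfDen α n := by
    refine ⟨(2*q).toNat + 1, ?_⟩
    have h := cfQ_growth hα ((2*q).toNat + 1)
    have : ((2*q).toNat + 1 : ℤ) = 2*q + 1 := by omega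
    rw [cfDen]
    omega
  classical
  have hspec : q < cfDen α (Nat.find hex) := Nat.find_spec hex
  have hN : Nat.find hex ≠ 0 := by
    intro h0
    rw [h0] at hspec
    have : cfDen α 0 = 1 := rfl
    omega
  obtain ⟨M, hM⟩ := Nat.exists_eq_succ_of_ne_zero hN
  rw [hM] at hspec
  refine ⟨M, ?_, hspec⟩
  have h2 := Nat.find_min hex (hM ▸ Nat.lt_succ_self M)
  omega

section KeyIneq

lemma eIII {a r s : ℝ} (ha2 : a = 2 ∨ 3 ≤ a) (hr0 : 0 < r) (hr1 : r ≤ 1)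
    (hs1 : a < s) (hs2 : s < a + 1) (h1 : 1 ≤ r*s) (h2 : 1 ≤ (a+r)*(s-a)) :
    2 ≤ (1+r)*(s-1) := by
  rcases ha2 with rfl | ha3
  · rcases le_total (s*s) (2*s+1) with hss | hss
    · have hs25 : s < 5/2 := by nlinarith
      have k1 : 3 - s ≤ (1+r)*(s-2) := by nlinarith
      have k3 : (3-s)*(s-1) ≤ (1+r)*(s-2)*(s-1) :=
        mul_le_mul_of_nonneg_right k1 (by linarith)
      have k2 : 2*(s-2) ≤ (3-s)*(s-1) := by nlinarith
      nlinarith [mul_pos (show (0:ℝ) < s - 2 by linarith) (show (0:ℝ) < s - 1 by linarith)]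
    · have k1 : s + 1 ≤ (1+r)*s := by nlinarith
      have k3 : (s+1)*(s-1) ≤ (1+r)*s*(s-1) :=
        mul_le_mul_of_nonneg_right k1 (by linarith)
      nlinarith
  · nlinarith

lemma eIII2 {a r s : ℝ} (ha2 : a = 2 ∨ 3 ≤ a) (hr0 : 0 < r) (hr1 : r ≤ 1)
    (hs1 : a < s) (hs2 : s < a + 1) (h1 : 1 ≤ r*s) (h2 : 1 ≤ (a+r)*(s-a)) :
    2 ≤ (a-1+r)*(s-(a-1)) := by
  rcases ha2 with rfl | ha3
  · have := eIII (Or.inl rfl) hr0 hr1 hs1 hs2 h1 h2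
    calc (2:ℝ) ≤ (1+r)*(s-1) := this
    _ = (2-1+r)*(s-(2-1)) := by ring
  · nlinarith

lemma keyNorm {a u v r s : ℝ} (ha2 : a = 2 ∨ 3 ≤ a) (ha : 2 ≤ a) (hu1 : 1 ≤ u)
    (hu2 : u ≤ a - 1) (hv : 1 ≤ v) (hr0 : 0 < r) (hr1 : r ≤ 1)
    (hs1 : a < s) (hs2 : s < a + 1) :
    2 * min 1 (min (r*s) ((a+r)*(s-a))) ≤ (u + v*r) * (v*s - u) := by
  have hsu : u + 1 + r ≤ s + 2 := by linarith
  -- endpoint 1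
  have hE1 : 2 * min 1 (min (r*s) ((a+r)*(s-a))) ≤ (1+r)*(s-1) := by
    rcases le_total (r*s) ((a+r)*(s-a)) with hc | hc
    · rcases le_total (r*s) 1 with hd | hd
      · have hM : min 1 (min (r*s) ((a+r)*(s-a))) ≤ r*s :=
          le_trans (min_le_right _ _) (min_le_left _ _)
        have hra : r ≤ s - a := by nlinarith
        nlinarith
      · have hM : min 1 (min (r*s) ((a+r)*(s-a))) ≤ 1 := min_le_left _ _
        have := eIII ha2 hr0 hr1 hs1 hs2 hd (le_trans hd hc)
        linarith
    · rcases le_total ((a+r)*(s-a)) 1 with hd | hd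
      · have hM : min 1 (min (r*s) ((a+r)*(s-a))) ≤ (a+r)*(s-a) :=
          le_trans (min_le_right _ _) (min_le_right _ _)
        have hra : s - a ≤ r := by nlinarith
        nlinarith [mul_nonneg (show (0:ℝ) ≤ a - 1 by linarith) (show (0:ℝ) ≤ r - (s-a) by linarith)]
      · have hM : min 1 (min (r*s) ((a+r)*(s-a))) ≤ 1 := min_le_left _ _
        have := eIII ha2 hr0 hr1 hs1 hs2 (le_trans hd hc) hd
        linarith
  -- endpoint 2
  have hE2 : 2 * min 1 (min (r*s) ((a+r)*(s-a))) ≤ (a-1+r)*(s-(a-1)) := by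
    rcases le_total (r*s) ((a+r)*(s-a)) with hc | hc
    · rcases le_total (r*s) 1 with hd | hd
      · have hM : min 1 (min (r*s) ((a+r)*(s-a))) ≤ r*s :=
          le_trans (min_le_right _ _) (min_le_left _ _)
        have hra : r ≤ s - a := by nlinarith
        nlinarith [mul_nonneg (show (0:ℝ) ≤ a - 1 by linarith) (show (0:ℝ) ≤ (s-a) - r by linarith)]
      · have hM : min 1 (min (r*s) ((a+r)*(s-a))) ≤ 1 := min_le_left _ _
        have := eIII2 ha2 hr0 hr1 hs1 hs2 hd (le_trans hd hc)
        linarith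
    · rcases le_total ((a+r)*(s-a)) 1 with hd | hd
      · have hM : min 1 (min (r*s) ((a+r)*(s-a))) ≤ (a+r)*(s-a) :=
          le_trans (min_le_right _ _) (min_le_right _ _)
        have hra : s - a ≤ r := by nlinarith
        nlinarith
      · have hM : min 1 (min (r*s) ((a+r)*(s-a))) ≤ 1 := min_le_left _ _
        have := eIII2 ha2 hr0 hr1 hs1 hs2 (le_trans hd hc) hd
        linarith
  -- reduce u to endpoints
  have hu : 2 * min 1 (min (r*s) ((a+r)*(s-a))) ≤ (u + r) * (s - u) := by
    rcases le_or_gt (s - u - 1 - r) 0 with hcase | hcase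
    · have key : 0 ≤ (a - 1 - u) * ((u + (a-1) + r) - s) := by
        apply mul_nonneg (by linarith)
        linarith
      nlinarith
    · have key : 0 ≤ (u - 1) * (s - u - 1 - r) := by
        apply mul_nonneg (by linarith)
        linarith
      nlinarith
  -- v step
  have hvstep : (u + r) * (s - u) ≤ (u + v*r) * (v*s - u) := by
    have key : 0 ≤ (v - 1) * (r*s*(v+1) + u*(s-r)) := by
      apply mul_nonneg (by linarith)
      have h1 : 0 ≤ u*(s-r) := mul_nonneg (by linarith) (by linarith)
      have h2 : 0 < r*s := mul_pos hr0 (by linarith)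
      nlinarith [mul_pos h2 (show (0:ℝ) < v+1 by linarith)]
    nlinarith
  linarith

/-- unnormalized version of keyNorm -/
lemma keyMain {a u v dd DD X Y Z : ℝ} (ha2 : a = 2 ∨ 3 ≤ a) (ha : 2 ≤ a)
    (hu1 : 1 ≤ u) (hu2 : u ≤ a - 1) (hv : 1 ≤ v) (hd1 : 1 ≤ dd) (hdD : dd ≤ DD)
    (hX0 : 0 < X) (hZ0 : 0 < Z) (hZX : Z < X) (hYrec : Y = a * X + Z) :
    2 * min (dd*Y) (min (DD*X) ((a*DD+dd)*Z)) ≤ (u*DD + v*dd) * (v*Y - u*X) := by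
  have hDD : 0 < DD := lt_of_lt_of_le (by linarith) hdD
  have key := keyNorm (a := a) (u := u) (v := v) (r := dd/DD) (s := Y/X)
    ha2 ha hu1 hu2 hv (by positivity) ((div_le_one hDD).2 hdD)
    ((lt_div_iff₀ hX0).2 (by nlinarith)) ((div_lt_iff₀ hX0).2 (by nlinarith))
  have hDX : (0:ℝ) < DD * X := by positivity
  have key2 := mul_le_mul_of_nonneg_left key hDX.le
  have eR : DD*X * ((u + v*(dd/DD)) * (v*(Y/X) - u)) = (u*DD + v*dd) * (v*Y - u*X) := by
    field_simp
    try exact Or.inl trivial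
  have hmono : ∀ x y : ℝ, DD*X * min x y = min (DD*X*x) (DD*X*y) := by
    intro x y
    rcases le_total x y with h | h
    · rw [min_eq_left h, min_eq_left (by nlinarith)]
    · rw [min_eq_right h, min_eq_right (by nlinarith)]
  have e1 : DD*X*(dd/DD*(Y/X)) = dd*Y := by
    field_simp
    try ring
  have e2 : DD*X*((a + dd/DD)*(Y/X - a)) = (a*DD+dd)*Z := by
    have hZeq : Z = Y - a*X := by linarith
    rw [hZeq]
    field_simp
    try exact Or.inl trivial
  have eL : DD*X * (2 * min 1 (min (dd/DD*(Y/X)) ((a + dd/DD)*(Y/X - a))))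
      = 2 * min (DD*X) (min (dd*Y) ((a*DD+dd)*Z)) := by
    rw [show DD*X * (2 * min 1 (min (dd/DD*(Y/X)) ((a + dd/DD)*(Y/X - a))))
        = 2 * (DD*X * min 1 (min (dd/DD*(Y/X)) ((a + dd/DD)*(Y/X - a)))) by ring]
    rw [hmono, hmono, e1, e2, mul_one]
  rw [eR, eL] at key2
  rw [min_left_comm]
  exact key2

end KeyIneq

lemma cfXi_eq_theta (α : ℝ) (n : ℕ) : cfXi α n = |thetaCF α (n+1)| := rfl

set_option maxHeartbeats 2000000 in
lemma core {α : ℝ} (hα : Irrational α) (m : ℕ) (p q : ℤ)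
    (hq1 : cfDen α (m+2) ≤ q) (hq2 : q < cfDen α (m+3))
    (hpq : ¬(p = cfNum α (m+2) ∧ q = cfDen α (m+2))) :
    2 * min ((cfDen α (m+1) : ℝ) * cfXi α (m+1))
        (min ((cfDen α (m+2) : ℝ) * cfXi α (m+2)) ((cfDen α (m+3) : ℝ) * cfXi α (m+3)))
      ≤ (q : ℝ) * |(q : ℝ) * α - (p : ℝ)| := by
  -- integer data
  set d : ℤ := cfQ α (m+2) with hd_def
  set D : ℤ := cfQ α (m+3) with hD_def
  set Q2 : ℤ := cfQ α (m+4) with hQ2_def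
  set A : ℤ := cfA α (m+3) with hA_def
  have hd1 : 1 ≤ d := cfQ_pos hα (m+1)
  have hdD : d < D := cfQ_strict hα m
  have hA1 : 1 ≤ A := cfA_one_le hα (m+2)
  have hQ2eq : Q2 = A * D + d := rfl
  -- real data
  set X : ℝ := |thetaCF α (m+3)| with hX_def
  set Y : ℝ := |thetaCF α (m+2)| with hY_def
  set Z : ℝ := |thetaCF α (m+4)| with hZ_def
  have hX0 : 0 < X := abs_theta_pos hα (m+3)
  have hY0 : 0 < Y := abs_theta_pos hα (m+2)
  have hZ0 : 0 < Z := abs_theta_pos hα (m+4)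
  have hXY : X < Y := abs_theta_succ_lt hα (m+2)
  have hZX : Z < X := abs_theta_succ_lt hα (m+3)
  have hYrec : Y = (A:ℝ) * X + Z := abs_theta_rec hα (m+2)
  have hId1 : (D:ℝ) * Y + (d:ℝ) * X = 1 := cf_identity hα (m+2)
  -- the three quantities in the min
  have ht1 : (cfDen α (m+1) : ℝ) * cfXi α (m+1) = (d:ℝ) * Y := rfl
  have ht2 : (cfDen α (m+2) : ℝ) * cfXi α (m+2) = (D:ℝ) * X := rfl
  have ht3 : (cfDen α (m+3) : ℝ) * cfXi α (m+3) = (Q2:ℝ) * Z := rfl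
  rw [ht1, ht2, ht3]
  -- decomposition
  obtain ⟨u, v, hq, hp⟩ : ∃ u v : ℤ, u * D + v * d = q ∧
      u * cfP α (m+3) + v * cfP α (m+2) = p := by
    have hεsq : ((-1:ℤ)^m)^2 = 1 := by
      rcases Nat.even_or_odd m with h | h
      · rw [h.neg_one_pow]; ring
      · rw [h.neg_one_pow]; ring
    have hdet : cfP α (m+2) * D - cfP α (m+3) * d = (-1:ℤ)^m := by
      have h := cf_det (α := α) (m+2)
      rw [← hD_def, ← hd_def] at h
      rw [h]; ring
    refine ⟨(-1:ℤ)^m * (cfP α (m+2) * q - d * p), (-1:ℤ)^m * (D * p - cfP α (m+3) * q), ?_, ?_⟩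
    · linear_combination ((-1:ℤ)^m * q) * hdet + q * hεsq
    · linear_combination ((-1:ℤ)^m * p) * hdet + p * hεsq
  -- real versions
  have hqR : (u:ℝ) * (D:ℝ) + (v:ℝ) * (d:ℝ) = (q:ℝ) := by exact_mod_cast congrArg (fun z : ℤ => (z:ℝ)) hq
  have hpR : (u:ℝ) * (cfP α (m+3):ℝ) + (v:ℝ) * (cfP α (m+2):ℝ) = (p:ℝ) := by
    exact_mod_cast congrArg (fun z : ℤ => (z:ℝ)) hp
  -- theta values with sign
  set εR : ℝ := (-1:ℝ)^m with hεR_def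
  have hεRsq : εR^2 = 1 := by
    rcases Nat.even_or_odd m with h | h
    · rw [hεR_def, h.neg_one_pow]; ring
    · rw [hεR_def, h.neg_one_pow]; ring
  have hth3 : thetaCF α (m+3) = εR * X := by
    have h := theta_eq_sign_abs hα (m+3)
    rw [← hX_def] at h
    rw [h, hεR_def]; ring_nf
  have hth2 : thetaCF α (m+2) = -(εR * Y) := by
    have h := theta_eq_sign_abs hα (m+2)
    rw [← hY_def] at h
    rw [h, hεR_def]; ring_nf
  have hlin : (q:ℝ) * α - (p:ℝ) = (u:ℝ) * thetaCF α (m+3) + (v:ℝ) * thetaCF α (m+2) := by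
    rw [thetaCF, thetaCF, ← hD_def, ← hd_def]
    linear_combination hpR - α * hqR
  have habs : |(q:ℝ) * α - (p:ℝ)| = |(u:ℝ) * X - (v:ℝ) * Y| := by
    rw [hlin, hth3, hth2]
    have : (u:ℝ) * (εR * X) + (v:ℝ) * (-(εR * Y)) = εR * ((u:ℝ) * X - (v:ℝ) * Y) := by ring
    rw [this, abs_mul, hεR_def]
    simp [abs_pow]
  rw [habs]
  have hq1' : D ≤ q := hq1
  have hq2' : q < Q2 := hq2
  have hq0 : 1 ≤ q := le_trans (le_trans hd1 hdD.le) hq1'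
  have hNum : cfNum α (m+2) = cfP α (m+3) := rfl
  have hDen : cfDen α (m+2) = D := rfl
  set P2 : ℤ := cfP α (m+2) with hP2_def
  set P3 : ℤ := cfP α (m+3) with hP3_def
  clear_value d D Q2 A X Y Z P2 P3
  -- case analysis
  rcases lt_trichotomy u 0 with hu0 | hu0 | hu0 <;> rcases lt_trichotomy v 0 with hv0 | hv0 | hv0
  · -- u<0, v<0 : impossible
    exfalso; nlinarith [hq, hq0, hd1, hdD]
  · -- u<0, v=0 : impossible
    exfalso; rw [hv0] at hq; nlinarith [hq, hq0, hd1, hdD]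
  · -- u<0, v>0 : mixed
    have hb : (X:ℝ) + Y ≤ |(u:ℝ) * X - (v:ℝ) * Y| := by
      have hu1 : (u:ℝ) ≤ -1 := by exact_mod_cast (by omega : u ≤ -1)
      have hv1 : (1:ℝ) ≤ (v:ℝ) := by exact_mod_cast (by omega : 1 ≤ v)
      have : (u:ℝ) * X - (v:ℝ) * Y ≤ -(X + Y) := by nlinarith
      rw [abs_sub_comm]
      calc X + Y ≤ (v:ℝ) * Y - (u:ℝ) * X := by nlinarith
      _ ≤ |(v:ℝ) * Y - (u:ℝ) * X| := le_abs_self _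
    have hmin : 2 * min ((d:ℝ)*Y) (min ((D:ℝ)*X) ((Q2:ℝ)*Z)) ≤ 1 := by
      have h1 : min ((d:ℝ)*Y) (min ((D:ℝ)*X) ((Q2:ℝ)*Z)) ≤ (d:ℝ)*Y := min_le_left _ _
      have h2 : min ((d:ℝ)*Y) (min ((D:ℝ)*X) ((Q2:ℝ)*Z)) ≤ (D:ℝ)*X :=
        le_trans (min_le_right _ _) (min_le_left _ _)
      have hdDR : (d:ℝ) ≤ (D:ℝ) := by exact_mod_cast hdD.le
      nlinarith
    have hDq : (D:ℝ) ≤ (q:ℝ) := by exact_mod_cast hq1'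
    have hdR : (1:ℝ) ≤ (d:ℝ) := by exact_mod_cast hd1
    calc 2 * min ((d:ℝ)*Y) (min ((D:ℝ)*X) ((Q2:ℝ)*Z)) ≤ 1 := hmin
    _ = (D:ℝ)*Y + (d:ℝ)*X := hId1.symm
    _ ≤ (q:ℝ) * (X + Y) := by
        have hdDR : (d:ℝ) ≤ (D:ℝ) := by exact_mod_cast hdD.le
        have step : (D:ℝ)*(X+Y) ≤ (q:ℝ)*(X+Y) :=
          mul_le_mul_of_nonneg_right hDq (by positivity)
        nlinarith [mul_le_mul_of_nonneg_right hdDR hX0.le]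
    _ ≤ (q:ℝ) * |(u:ℝ) * X - (v:ℝ) * Y| := by
        apply mul_le_mul_of_nonneg_left hb (by positivity)
  · -- u=0, v<0 : impossible
    exfalso; rw [hu0] at hq; nlinarith [hq, hq0, hd1, hdD]
  · -- u=0, v=0 : impossible
    exfalso; rw [hu0, hv0] at hq; simp at hq; omega
  · -- u=0, v>0 : multiple of q_{m}... v ≥ 2
    have hv2 : 2 ≤ v := by
      rcases eq_or_lt_of_le (by omega : 1 ≤ v) with h1 | h1
      · exfalso
        rw [hu0, ← h1] at hq
        simp at hq
        omega
      · omega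
    rw [hu0] at hq ⊢
    simp only [Int.cast_zero, zero_mul, zero_sub, abs_neg] at *
    have hqvd : (q:ℝ) = (v:ℝ) * (d:ℝ) := by
      have : v * d = q := by linarith [hq]
      exact_mod_cast (congrArg (fun z : ℤ => (z:ℝ)) this).symm
    have hv2R : (2:ℝ) ≤ (v:ℝ) := by exact_mod_cast hv2
    have hdR : (1:ℝ) ≤ (d:ℝ) := by exact_mod_cast hd1
    have habs2 : |(v:ℝ) * Y| = (v:ℝ) * Y := abs_of_pos (by nlinarith)
    rw [habs2, hqvd]
    have h1 : min ((d:ℝ)*Y) (min ((D:ℝ)*X) ((Q2:ℝ)*Z)) ≤ (d:ℝ)*Y := min_le_left _ _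
    have h4 : (4:ℝ) ≤ (v:ℝ)*(v:ℝ) := by nlinarith
    have hdY : (0:ℝ) ≤ (d:ℝ)*Y := by positivity
    nlinarith [mul_le_mul_of_nonneg_right h4 hdY]
  · -- u>0, v<0 : mixed
    have hb : (X:ℝ) + Y ≤ |(u:ℝ) * X - (v:ℝ) * Y| := by
      have hu1 : (1:ℝ) ≤ (u:ℝ) := by exact_mod_cast (by omega : 1 ≤ u)
      have hv1 : (v:ℝ) ≤ -1 := by exact_mod_cast (by omega : v ≤ -1)
      calc X + Y ≤ (u:ℝ) * X - (v:ℝ) * Y := by nlinarith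
      _ ≤ |(u:ℝ) * X - (v:ℝ) * Y| := le_abs_self _
    have hmin : 2 * min ((d:ℝ)*Y) (min ((D:ℝ)*X) ((Q2:ℝ)*Z)) ≤ 1 := by
      have h1 : min ((d:ℝ)*Y) (min ((D:ℝ)*X) ((Q2:ℝ)*Z)) ≤ (d:ℝ)*Y := min_le_left _ _
      have h2 : min ((d:ℝ)*Y) (min ((D:ℝ)*X) ((Q2:ℝ)*Z)) ≤ (D:ℝ)*X :=
        le_trans (min_le_right _ _) (min_le_left _ _)
      have hdDR : (d:ℝ) ≤ (D:ℝ) := by exact_mod_cast hdD.le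
      nlinarith
    have hDq : (D:ℝ) ≤ (q:ℝ) := by exact_mod_cast hq1'
    have hdR : (1:ℝ) ≤ (d:ℝ) := by exact_mod_cast hd1
    calc 2 * min ((d:ℝ)*Y) (min ((D:ℝ)*X) ((Q2:ℝ)*Z)) ≤ 1 := hmin
    _ = (D:ℝ)*Y + (d:ℝ)*X := hId1.symm
    _ ≤ (q:ℝ) * (X + Y) := by
        have hdDR : (d:ℝ) ≤ (D:ℝ) := by exact_mod_cast hdD.le
        have step : (D:ℝ)*(X+Y) ≤ (q:ℝ)*(X+Y) :=
          mul_le_mul_of_nonneg_right hDq (by positivity)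
        nlinarith [mul_le_mul_of_nonneg_right hdDR hX0.le]
    _ ≤ (q:ℝ) * |(u:ℝ) * X - (v:ℝ) * Y| := by
        apply mul_le_mul_of_nonneg_left hb (by positivity)
  · -- u>0, v=0 : multiple of convergent
    have hu2 : 2 ≤ u := by
      rcases eq_or_lt_of_le (by omega : 1 ≤ u) with h1 | h1
      · exfalso
        apply hpq
        rw [hv0, ← h1] at hq hp
        constructor
        · rw [hNum]; omega
        · rw [hDen]; omega
      · omega
    rw [hv0] at hq ⊢
    simp only [Int.cast_zero, zero_mul, add_zero, sub_zero] at *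
    have hqud : (q:ℝ) = (u:ℝ) * (D:ℝ) := by
      have : u * D = q := by linarith [hq]
      exact_mod_cast (congrArg (fun z : ℤ => (z:ℝ)) this).symm
    have hu2R : (2:ℝ) ≤ (u:ℝ) := by exact_mod_cast hu2
    have hDR : (1:ℝ) ≤ (D:ℝ) := by exact_mod_cast (le_trans hd1 hdD.le)
    have habs2 : |(u:ℝ) * X| = (u:ℝ) * X := abs_of_pos (by nlinarith)
    rw [habs2, hqud]
    have h1 : min ((d:ℝ)*Y) (min ((D:ℝ)*X) ((Q2:ℝ)*Z)) ≤ (D:ℝ)*X :=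
      le_trans (min_le_right _ _) (min_le_left _ _)
    have h4 : (4:ℝ) ≤ (u:ℝ)*(u:ℝ) := by nlinarith
    have hDX : (0:ℝ) ≤ (D:ℝ)*X := by positivity
    nlinarith [mul_le_mul_of_nonneg_right h4 hDX]
  · -- u>0, v>0 : main case
    have huA : u < A := by nlinarith [hq2', hQ2eq, hq, hd1, hdD]
    have hA2 : 2 ≤ A := by omega
    have hA2R : (2:ℝ) ≤ (A:ℝ) := by exact_mod_cast hA2
    have ha2 : (A:ℝ) = 2 ∨ 3 ≤ (A:ℝ) := by
      rcases lt_or_ge A 3 with h | h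
      · left; have : A = 2 := by omega
        rw [this]; norm_num
      · right; exact_mod_cast h
    have hdR : (1:ℝ) ≤ (d:ℝ) := by exact_mod_cast hd1
    have hdDR : (d:ℝ) ≤ (D:ℝ) := by exact_mod_cast hdD.le
    have huR : (1:ℝ) ≤ (u:ℝ) := by exact_mod_cast (by omega : 1 ≤ u)
    have hvR : (1:ℝ) ≤ (v:ℝ) := by exact_mod_cast (by omega : 1 ≤ v)
    have hu2R : (u:ℝ) ≤ (A:ℝ) - 1 := by
      have h : u ≤ A - 1 := by omega
      exact_mod_cast h
    have key := keyMain (a := (A:ℝ)) (u := (u:ℝ)) (v := (v:ℝ)) (dd := (d:ℝ)) (DD := (D:ℝ))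
      (X := X) (Y := Y) (Z := Z) ha2 hA2R huR hu2R hvR hdR hdDR hX0 hZ0 hZX hYrec
    have hQ2R : ((Q2:ℤ):ℝ) = (A:ℝ)*(D:ℝ) + (d:ℝ) := by
      exact_mod_cast congrArg (fun z : ℤ => (z:ℝ)) hQ2eq
    rw [← hQ2R] at key
    have habs3 : |(u:ℝ) * X - (v:ℝ) * Y| = (v:ℝ)*Y - (u:ℝ)*X := by
      rw [abs_sub_comm]
      apply abs_of_pos
      have hAu : (u:ℝ) + 1 ≤ (A:ℝ) := by linarith
      nlinarith
    rw [habs3]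
    have hqR2 : (q:ℝ) = (u:ℝ)*(D:ℝ) + (v:ℝ)*(d:ℝ) := hqR.symm
    rw [hqR2]
    exact key


/-- `ψ_α(t) = min { ‖qα‖ : q ∈ ℤ, 1 ≤ q ≤ t }`. -/
noncomputable def psiFn (α t : ℝ) : ℝ :=
  sInf {x : ℝ | ∃ p q : ℤ, 1 ≤ q ∧ (q : ℝ) ≤ t ∧ x = |(q : ℝ) * α - (p : ℝ)|}

/-- `ψ_α^[2](t)`: the same minimum but over pairs `(p,q)` that are not `(pₙ,qₙ)` for any `n ≥ 0`. -/
noncomputable def psi2Fn (α t : ℝ) : ℝ :=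
  sInf {x : ℝ | ∃ p q : ℤ, 1 ≤ q ∧ (q : ℝ) ≤ t ∧
    (∀ n : ℕ, ¬(p = cfNum α n ∧ q = cfDen α n)) ∧ x = |(q : ℝ) * α - (p : ℝ)|}

/-- `ψ_α^[2]*(t)`: the same minimum but over pairs `(p,q)` with `p/q ≠ pₙ/qₙ` for all `n ≥ 0`. -/
noncomputable def psi2sFn (α t : ℝ) : ℝ :=
  sInf {x : ℝ | ∃ p q : ℤ, 1 ≤ q ∧ (q : ℝ) ≤ t ∧
    (∀ n : ℕ, (p : ℝ) / (q : ℝ) ≠ (cfNum α n : ℝ) / (cfDen α n : ℝ)) ∧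
    x = |(q : ℝ) * α - (p : ℝ)|}

/-- `λ(α) = liminf_{t→∞} t · ψ_α(t)`. -/
noncomputable def lamOf (α : ℝ) : ℝ := Filter.liminf (fun t : ℝ => t * psiFn α t) Filter.atTop

/-- `𝔨(α) = liminf_{t→∞} t · ψ_α^[2](t)`. -/
noncomputable def kOf (α : ℝ) : ℝ := Filter.liminf (fun t : ℝ => t * psi2Fn α t) Filter.atTop

/-- `𝔨*(α) = liminf_{t→∞} t · ψ_α^[2]*(t)`. -/
noncomputable def ksOf (α : ℝ) : ℝ := Filter.liminf (fun t : ℝ => t * psi2sFn α t) Filter.atTop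


/- ===== auxiliary development (part B) ===== -/
noncomputable def Lval (α : ℝ) : ℝ :=
  Filter.liminf (fun n : ℕ => (cfDen α n : ℝ) * cfXi α n) Filter.atTop

section Psi
variable {α : ℝ}

lemma psiFn_nonneg (t : ℝ) : 0 ≤ psiFn α t :=
  Real.sInf_nonneg (by rintro x ⟨p, q, _, _, rfl⟩; positivity)

lemma psi2Fn_nonneg (t : ℝ) : 0 ≤ psi2Fn α t :=
  Real.sInf_nonneg (by rintro x ⟨p, q, _, _, _, rfl⟩; positivity)

lemma psi2sFn_nonneg (t : ℝ) : 0 ≤ psi2sFn α t :=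
  Real.sInf_nonneg (by rintro x ⟨p, q, _, _, _, rfl⟩; positivity)

lemma psiFn_bdd (t : ℝ) : BddBelow {x : ℝ | ∃ p q : ℤ, 1 ≤ q ∧ (q : ℝ) ≤ t ∧
    x = |(q : ℝ) * α - (p : ℝ)|} :=
  ⟨0, by rintro x ⟨p, q, _, _, rfl⟩; positivity⟩

lemma psi2Fn_bdd (t : ℝ) : BddBelow {x : ℝ | ∃ p q : ℤ, 1 ≤ q ∧ (q : ℝ) ≤ t ∧
    (∀ n : ℕ, ¬(p = cfNum α n ∧ q = cfDen α n)) ∧ x = |(q : ℝ) * α - (p : ℝ)|} :=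
  ⟨0, by rintro x ⟨p, q, _, _, _, rfl⟩; positivity⟩

lemma psiFn_le {t : ℝ} {p q : ℤ} (hq1 : 1 ≤ q) (hq2 : (q:ℝ) ≤ t) :
    psiFn α t ≤ |(q : ℝ) * α - (p : ℝ)| :=
  csInf_le (psiFn_bdd t) ⟨p, q, hq1, hq2, rfl⟩

lemma psi2Fn_le {t : ℝ} {p q : ℤ} (hq1 : 1 ≤ q) (hq2 : (q:ℝ) ≤ t)
    (hex : ∀ m : ℕ, ¬(p = cfNum α m ∧ q = cfDen α m)) :
    psi2Fn α t ≤ |(q : ℝ) * α - (p : ℝ)| :=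
  csInf_le (psi2Fn_bdd t) ⟨p, q, hq1, hq2, hex, rfl⟩

lemma theta_one_eq : thetaCF α 1 = Int.fract α := by
  rw [thetaCF, show cfQ α 1 = 1 from rfl, show cfP α 1 = ⌊α⌋ from rfl, Int.fract]
  push_cast; ring

lemma cfXi_lt_one (hα : Irrational α) (n : ℕ) : cfXi α n < 1 := by
  have h1 : cfXi α n ≤ |thetaCF α 1| := abs_theta_antitone hα (by omega : 1 ≤ n + 1)
  have h2 : |thetaCF α 1| < 1 := by
    rw [theta_one_eq, abs_of_nonneg (Int.fract_nonneg α)]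
    exact Int.fract_lt_one α
  linarith

lemma cfXi_nonneg (n : ℕ) : 0 ≤ cfXi α n := abs_nonneg _

lemma den_xi_le_one (hα : Irrational α) (n : ℕ) : (cfDen α n : ℝ) * cfXi α n ≤ 1 := by
  have hid := cf_identity hα (n+1)
  have h1 : (cfDen α n : ℝ) ≤ (cfQ α (n+2) : ℝ) := by
    exact_mod_cast cfQ_mono hα (by omega : n + 1 ≤ n + 2)
  have h2 : (0:ℝ) ≤ (cfQ α (n+1) : ℝ) := by exact_mod_cast cfQ_nonneg hα (n+1)
  have h3 : 0 ≤ |thetaCF α (n+2)| := abs_nonneg _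
  have h4 : 0 ≤ |thetaCF α (n+1)| := abs_nonneg _
  have hXi : cfXi α n = |thetaCF α (n+1)| := rfl
  have hDen : (cfDen α n : ℤ) = cfQ α (n+1) := rfl
  rw [hXi]
  nlinarith [mul_le_mul_of_nonneg_right h1 h4]

/-- the good pair `(⌊α⌋ + 2, 1)` avoiding all convergents. -/
lemma good_pair (hα : Irrational α) :
    (∀ m : ℕ, ¬((⌊α⌋ + 2 : ℤ) = cfNum α m ∧ (1:ℤ) = cfDen α m)) ∧
    (∀ m : ℕ, ((⌊α⌋ + 2 : ℤ) : ℝ) / ((1:ℤ) : ℝ) ≠ (cfNum α m : ℝ) / (cfDen α m : ℝ)) := by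
  have hfl := Int.floor_le α
  have hfl2 := Int.lt_floor_add_one α
  constructor
  · rintro m ⟨h1, h2⟩
    have hxi : cfXi α m = |(((1:ℤ)):ℝ) * α - ((⌊α⌋ + 2 : ℤ) : ℝ)| := by
      rw [cfXi, ← h1, ← h2]
    have : (1:ℝ) < |((1:ℤ):ℝ) * α - ((⌊α⌋ + 2 : ℤ) : ℝ)| := by
      push_cast
      rw [abs_sub_comm, abs_of_pos (by linarith)]
      linarith
    have := cfXi_lt_one hα m
    linarith
  · intro m heq
    have hq1 : (1:ℝ) ≤ (cfDen α m : ℝ) := by exact_mod_cast cfDen_pos hα m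
    have hq0 : (0:ℝ) < (cfDen α m : ℝ) := by linarith
    have hclose : |(cfNum α m : ℝ) / (cfDen α m : ℝ) - α| < 1 := by
      have e1 : (cfNum α m : ℝ) / (cfDen α m : ℝ) - α
          = -(((cfDen α m : ℝ) * α - (cfNum α m : ℝ)) / (cfDen α m : ℝ)) := by
        field_simp
        ring
      rw [e1, abs_neg, abs_div, abs_of_pos hq0]
      have h2 : |(cfDen α m : ℝ) * α - (cfNum α m : ℝ)| < 1 := cfXi_lt_one hα m
      calc |(cfDen α m : ℝ) * α - (cfNum α m : ℝ)| / (cfDen α m : ℝ)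
          ≤ |(cfDen α m : ℝ) * α - (cfNum α m : ℝ)| := by
            apply div_le_self (abs_nonneg _) hq1
      _ < 1 := h2
    rw [← heq] at hclose
    push_cast at hclose
    rw [abs_sub_comm, abs_of_neg (by linarith)] at hclose
    linarith

lemma psi2set_nonempty (hα : Irrational α) {t : ℝ} (ht : 1 ≤ t) :
    {x : ℝ | ∃ p q : ℤ, 1 ≤ q ∧ (q : ℝ) ≤ t ∧
      (∀ n : ℕ, ¬(p = cfNum α n ∧ q = cfDen α n)) ∧
      x = |(q : ℝ) * α - (p : ℝ)|}.Nonempty := by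
  refine ⟨_, ⟨⌊α⌋ + 2, 1, le_refl _, by exact_mod_cast ht, (good_pair hα).1, rfl⟩⟩

lemma psi2sset_nonempty (hα : Irrational α) {t : ℝ} (ht : 1 ≤ t) :
    {x : ℝ | ∃ p q : ℤ, 1 ≤ q ∧ (q : ℝ) ≤ t ∧
      (∀ n : ℕ, (p : ℝ) / (q : ℝ) ≠ (cfNum α n : ℝ) / (cfDen α n : ℝ)) ∧
      x = |(q : ℝ) * α - (p : ℝ)|}.Nonempty := by
  refine ⟨_, ⟨⌊α⌋ + 2, 1, le_refl _, by exact_mod_cast ht, (good_pair hα).2, rfl⟩⟩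

lemma psi2_le_psi2s (hα : Irrational α) {t : ℝ} (ht : 1 ≤ t) :
    psi2Fn α t ≤ psi2sFn α t := by
  apply csInf_le_csInf (psi2Fn_bdd t) (psi2sset_nonempty hα ht)
  rintro x ⟨p, q, h1, h2, hrat, rfl⟩
  refine ⟨p, q, h1, h2, fun n hn => hrat n ?_, rfl⟩
  rw [hn.1, hn.2]

lemma exists_delta (hα : Irrational α) (M : ℤ) :
    ∃ δ : ℝ, 0 < δ ∧ ∀ p q : ℤ, 1 ≤ q → q ≤ M → δ ≤ |(q:ℝ) * α - (p:ℝ)| := by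
  rcases lt_or_ge M 1 with hM | hM
  · exact ⟨1, one_pos, fun p q h1 h2 => absurd (le_trans h1 h2) (by omega)⟩
  · have hne : (Finset.Icc (1:ℤ) M).Nonempty := ⟨1, by simp [hM]⟩
    refine ⟨(Finset.Icc (1:ℤ) M).inf' hne
      (fun k => |(k:ℝ) * α - (round ((k:ℝ) * α) : ℝ)|), ?_, ?_⟩
    · rw [Finset.lt_inf'_iff]
      intro k hk
      simp only [Finset.mem_Icc] at hk
      have hirr : Irrational ((k:ℝ) * α) := hα.intCast_mul (by omega)
      have : Irrational ((k:ℝ) * α - (round ((k:ℝ) * α) : ℤ)) := hirr.sub_intCast _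
      have hne0 : (k:ℝ) * α - (round ((k:ℝ) * α) : ℝ) ≠ 0 := by
        exact_mod_cast this.ne_zero
      exact abs_pos.mpr hne0
    · intro p q h1 h2
      calc (Finset.Icc (1:ℤ) M).inf' hne (fun k => |(k:ℝ) * α - (round ((k:ℝ) * α) : ℝ)|)
          ≤ |(q:ℝ) * α - (round ((q:ℝ) * α) : ℝ)| :=
            Finset.inf'_le _ (by simp [Finset.mem_Icc]; omega)
      _ ≤ |(q:ℝ) * α - (p:ℝ)| := round_le ((q:ℝ) * α) p

end Psi

lemma tendsto_den {α : ℝ} (hα : Irrational α) :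
    Filter.Tendsto (fun n : ℕ => (cfDen α n : ℝ)) Filter.atTop Filter.atTop := by
  apply Filter.tendsto_atTop_mono (f := fun n : ℕ => (n : ℝ) / 2)
  · intro n
    have h := cfQ_growth hα n
    have : (n : ℝ) ≤ 2 * (cfDen α n : ℝ) := by exact_mod_cast h
    linarith
  · exact (tendsto_natCast_atTop_atTop).atTop_div_const two_pos

section Star
variable {α : ℝ}

lemma psi2sFn_bdd (t : ℝ) : BddBelow {x : ℝ | ∃ p q : ℤ, 1 ≤ q ∧ (q : ℝ) ≤ t ∧
    (∀ n : ℕ, (p : ℝ) / (q : ℝ) ≠ (cfNum α n : ℝ) / (cfDen α n : ℝ)) ∧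
    x = |(q : ℝ) * α - (p : ℝ)|} :=
  ⟨0, by rintro x ⟨p, q, _, _, _, rfl⟩; positivity⟩

lemma psi2sFn_le {t : ℝ} {p q : ℤ} (hq1 : 1 ≤ q) (hq2 : (q:ℝ) ≤ t)
    (hrat : ∀ m : ℕ, (p : ℝ) / (q : ℝ) ≠ (cfNum α m : ℝ) / (cfDen α m : ℝ)) :
    psi2sFn α t ≤ |(q : ℝ) * α - (p : ℝ)| :=
  csInf_le (psi2sFn_bdd t) ⟨p, q, hq1, hq2, hrat, rfl⟩

lemma ratio_eq_conseq (hα : Irrational α) {p q : ℤ} {m : ℕ} (hq0 : 0 < q)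
    (h : (p : ℝ) / (q : ℝ) = (cfNum α m : ℝ) / (cfDen α m : ℝ)) :
    p * cfDen α m = q * cfNum α m ∧
    (cfDen α m : ℝ) * |(q:ℝ) * α - (p:ℝ)| = (q:ℝ) * cfXi α m := by
  have hQ0 : (0:ℤ) < cfDen α m := cfDen_pos hα m
  have hq0R : (0:ℝ) < (q:ℝ) := by exact_mod_cast hq0
  have hQ0R : (0:ℝ) < ((cfDen α m : ℝ)) := by exact_mod_cast hQ0
  have hcrossR : (p:ℝ) * (cfDen α m : ℝ) = (q:ℝ) * (cfNum α m : ℝ) := by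
    rw [div_eq_div_iff (by positivity) (by positivity)] at h
    linarith [h]
  have hcross : p * cfDen α m = q * cfNum α m := by exact_mod_cast hcrossR
  refine ⟨hcross, ?_⟩
  have hlin : (cfDen α m : ℝ) * ((q:ℝ) * α - (p:ℝ))
      = (q:ℝ) * ((cfDen α m : ℝ) * α - (cfNum α m : ℝ)) := by
    linear_combination -hcrossR
  rw [cfXi, ← abs_of_pos hQ0R, ← abs_mul, hlin, abs_mul, abs_of_pos hq0R]
  rw [abs_of_pos hQ0R]

lemma theta_diff_abs (hα : Irrational α) (k : ℕ) :
    |thetaCF α (k+2) - thetaCF α (k+1)| = |thetaCF α (k+2)| + |thetaCF α (k+1)| := by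
  have e1 := theta_eq_sign_abs hα (k+1)
  have e2 := theta_eq_sign_abs hα (k+2)
  have hp1 : ((-1:ℝ))^(k+2+1) = (-1:ℝ)^(k+1) := by ring
  have hp2 : ((-1:ℝ))^(k+1+1) = -(-1:ℝ)^(k+1) := by ring
  nth_rewrite 1 [e2, e1]
  rw [hp1, hp2]
  rcases Nat.even_or_odd (k+1) with h | h
  · rw [h.neg_one_pow,
      show (1:ℝ) * |thetaCF α (k+2)| - -1 * |thetaCF α (k+1)|
        = |thetaCF α (k+2)| + |thetaCF α (k+1)| by ring]
    exact abs_of_nonneg (by positivity)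
  · rw [h.neg_one_pow,
      show (-1:ℝ) * |thetaCF α (k+2)| - -(-1) * |thetaCF α (k+1)|
        = -(|thetaCF α (k+2)| + |thetaCF α (k+1)|) by ring, abs_neg]
    exact abs_of_nonneg (by positivity)

lemma theta_sum_abs (hα : Irrational α) (k : ℕ) :
    |thetaCF α (k+2) + thetaCF α k| = |thetaCF α (k+2)| + |thetaCF α k| := by
  have e1 := theta_eq_sign_abs hα k
  have e2 := theta_eq_sign_abs hα (k+2)
  have hp1 : ((-1:ℝ))^(k+2+1) = (-1:ℝ)^(k+1) := by ring
  nth_rewrite 1 [e2, e1]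
  rw [hp1]
  rcases Nat.even_or_odd (k+1) with h | h
  · rw [h.neg_one_pow,
      show (1:ℝ) * |thetaCF α (k+2)| + 1 * |thetaCF α k|
        = |thetaCF α (k+2)| + |thetaCF α k| by ring]
    exact abs_of_nonneg (by positivity)
  · rw [h.neg_one_pow,
      show (-1:ℝ) * |thetaCF α (k+2)| + -1 * |thetaCF α k|
        = -(|thetaCF α (k+2)| + |thetaCF α k|) by ring, abs_neg]
    exact abs_of_nonneg (by positivity)

lemma neg_one_pow_ne_zero' (j : ℕ) : ((-1:ℤ))^j ≠ 0 := by
  rcases Nat.even_or_odd j with h | h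
  · rw [h.neg_one_pow]; norm_num
  · rw [h.neg_one_pow]; norm_num

set_option maxHeartbeats 1000000 in
lemma freq_small_star (hα : Irrational α) :
    ∃ᶠ t : ℝ in Filter.atTop, t * psi2sFn α t ≤ 8 := by
  rw [Filter.frequently_atTop]
  intro b
  obtain ⟨j, hj0⟩ : ∃ j : ℕ, b ≤ (cfQ α (j + 3) : ℝ) := by
    obtain ⟨n0, hn0⟩ := ((tendsto_den hα).eventually_ge_atTop b).exists
    refine ⟨n0, le_trans hn0 ?_⟩
    exact_mod_cast cfDen_mono hα (by omega : n0 ≤ n0 + 2)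
  have hstrict1 : cfQ α (j+2) < cfQ α (j+3) := cfQ_strict hα j
  have hstrict2 : cfQ α (j+3) < cfQ α (j+4) := cfQ_strict hα (j+1)
  have hstrict3 : cfQ α (j+4) < cfQ α (j+5) := cfQ_strict hα (j+2)
  have hpos2 : 1 ≤ cfQ α (j+2) := cfQ_pos hα (j+1)
  have hrec4 : cfQ α (j+4) = cfA α (j+3) * cfQ α (j+3) + cfQ α (j+2) := rfl
  have hrec5 : cfQ α (j+5) = cfA α (j+4) * cfQ α (j+4) + cfQ α (j+3) := rfl
  have hrecP4 : cfP α (j+4) = cfA α (j+3) * cfP α (j+3) + cfP α (j+2) := rfl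
  have hA3 : 1 ≤ cfA α (j+3) := cfA_one_le hα (j+2)
  have hA4 : 1 ≤ cfA α (j+4) := cfA_one_le hα (j+3)
  have habs3 : 0 < |thetaCF α (j+3)| := abs_theta_pos hα (j+3)
  have habs4 : 0 < |thetaCF α (j+4)| := abs_theta_pos hα (j+4)
  have hlt34 : |thetaCF α (j+4)| < |thetaCF α (j+3)| := abs_theta_succ_lt hα (j+3)
  have hlt45 : |thetaCF α (j+5)| < |thetaCF α (j+4)| := abs_theta_succ_lt hα (j+4)
  have hrecT : |thetaCF α (j+2)| = (cfA α (j+3) : ℝ) * |thetaCF α (j+3)| + |thetaCF α (j+4)| :=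
    abs_theta_rec hα (j+2)
  have hid3 : (cfQ α (j+3) : ℝ) * |thetaCF α (j+2)| + (cfQ α (j+2) : ℝ) * |thetaCF α (j+3)| = 1 :=
    cf_identity hα (j+2)
  have hid4 : (cfQ α (j+4) : ℝ) * |thetaCF α (j+3)| + (cfQ α (j+3) : ℝ) * |thetaCF α (j+4)| = 1 :=
    cf_identity hα (j+3)
  have hQ3nn : (0:ℝ) ≤ (cfQ α (j+3) : ℝ) := by exact_mod_cast (by omega : (0:ℤ) ≤ cfQ α (j+3))
  have hQ4nn : (0:ℝ) ≤ (cfQ α (j+4) : ℝ) := by exact_mod_cast (by omega : (0:ℤ) ≤ cfQ α (j+4))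
  have hdet3 := cf_det (α := α) (j+3)
  have hdet2 := cf_det (α := α) (j+2)
  rcases eq_or_lt_of_le hA3 with hA1 | hA2
  · -- a = 1 : use (P(j+4)+P(j+2), Q(j+4)+Q(j+2))
    have hQ4e : cfQ α (j+4) = cfQ α (j+3) + cfQ α (j+2) := by rw [hrec4, ← hA1]; ring
    have hP4e : cfP α (j+4) = cfP α (j+3) + cfP α (j+2) := by rw [hrecP4, ← hA1]; ring
    refine ⟨((cfQ α (j+4) + cfQ α (j+2) : ℤ) : ℝ), ?_, ?_⟩
    · have : (cfQ α (j+3) : ℝ) ≤ ((cfQ α (j+4) + cfQ α (j+2) : ℤ) : ℝ) := by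
        exact_mod_cast (by omega : cfQ α (j+3) ≤ cfQ α (j+4) + cfQ α (j+2))
      linarith
    set q : ℤ := cfQ α (j+4) + cfQ α (j+2) with hq_def
    set p : ℤ := cfP α (j+4) + cfP α (j+2) with hp_def
    have hq5 : q < cfQ α (j+5) := by rw [hq_def, hrec5]; nlinarith
    have hq0 : (1:ℤ) ≤ q := by omega
    have hq0R : (0:ℝ) < (q:ℝ) := by exact_mod_cast (by omega : (0:ℤ) < q)
    have hVeq : (q:ℝ) * α - (p:ℝ) = thetaCF α (j+4) + thetaCF α (j+2) := by
      rw [thetaCF, thetaCF, hq_def, hp_def]; push_cast; ring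
    have hV : |(q:ℝ) * α - (p:ℝ)| = |thetaCF α (j+4)| + |thetaCF α (j+2)| := by
      rw [hVeq]; exact theta_sum_abs hα (j+2)
    have hrat : ∀ m : ℕ, (p : ℝ) / (q : ℝ) ≠ (cfNum α m : ℝ) / (cfDen α m : ℝ) := by
      intro m heq
      obtain ⟨hcross, hval⟩ := ratio_eq_conseq hα (by omega) heq
      rw [hV] at hval
      have hXim : cfXi α m = |thetaCF α (m+1)| := rfl
      have hDenm : (cfDen α m : ℤ) = cfQ α (m+1) := rfl
      rw [hXim] at hval
      rw [show ((cfDen α m : ℤ):ℝ) = ((cfQ α (m+1) : ℤ):ℝ) by rw [hDenm]] at hval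
      rcases le_or_gt (m+1) (j+2) with hm | hm
      · have h1 : |thetaCF α (j+2)| ≤ |thetaCF α (m+1)| := abs_theta_antitone hα hm
        have h2 : (cfQ α (m+1) : ℝ) ≤ (cfQ α (j+2) : ℝ) := by exact_mod_cast cfQ_mono hα hm
        have h3 : (0:ℝ) < (cfQ α (m+1):ℝ) := by exact_mod_cast cfQ_pos hα m
        have hq2R : (2:ℝ) * (cfQ α (j+2):ℝ) < (q:ℝ) := by
          exact_mod_cast (by omega : 2 * cfQ α (j+2) < q)
        have hle42 : |thetaCF α (j+4)| ≤ |thetaCF α (j+2)| :=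
          abs_theta_antitone hα (by omega)
        have k1 : |thetaCF α (j+4)| + |thetaCF α (j+2)| ≤ 2 * |thetaCF α (m+1)| := by linarith
        nlinarith [mul_le_mul_of_nonneg_left k1 h3.le,
          mul_le_mul_of_nonneg_right h2 (abs_nonneg (thetaCF α (m+1))),
          mul_pos (show (0:ℝ) < (q:ℝ) - 2*(cfQ α (j+2):ℝ) by linarith)
            (abs_theta_pos hα (m+1))]
      rcases le_or_gt (m+1) (j+4) with hm2 | hm2
      · rcases (by omega : m = j + 2 ∨ m = j + 3) with hmeq | hmeq
        · subst hmeq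
          have hcross' : p * cfQ α (j+3) = q * cfP α (j+3) := hcross
          have e3 : ((-1:ℤ))^(j+3) = -(-1:ℤ)^(j+2) := by ring
          have hzero : (2:ℤ) * (-1)^(j+2) = 0 := by
            rw [hq_def, hp_def] at hcross'
            linear_combination -hdet2 + hdet3 + hcross' + e3
          have := neg_one_pow_ne_zero' (j+2)
          omega
        · subst hmeq
          have hcross' : p * cfQ α (j+4) = q * cfP α (j+4) := hcross
          have hzero : ((-1:ℤ))^(j+2) = 0 := by
            rw [hq_def, hp_def] at hcross'
            linear_combination -hdet2 + hcross' - (cfP α (j+2)) * hQ4e + (cfQ α (j+2)) * hP4e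
          exact neg_one_pow_ne_zero' (j+2) hzero
      · have hm4 : j + 5 ≤ m + 1 := by omega
        have h1 : |thetaCF α (m+1)| ≤ |thetaCF α (j+5)| := abs_theta_antitone hα hm4
        have h2 : (cfQ α (j+5) : ℝ) ≤ (cfQ α (m+1) : ℝ) := by exact_mod_cast cfQ_mono hα hm4
        have hq5R : (q:ℝ) < (cfQ α (j+5):ℝ) := by exact_mod_cast hq5
        have k1 : |thetaCF α (m+1)| < |thetaCF α (j+4)| + |thetaCF α (j+2)| := by
          have := abs_theta_succ_lt hα (j+4)
          have h42 : |thetaCF α (j+4)| ≤ |thetaCF α (j+2)| := abs_theta_antitone hα (by omega)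
          linarith
        have k2 : (q:ℝ) * |thetaCF α (m+1)| < (q:ℝ) * (|thetaCF α (j+4)| + |thetaCF α (j+2)|) :=
          mul_lt_mul_of_pos_left k1 hq0R
        have k3 : (q:ℝ) * (|thetaCF α (j+4)| + |thetaCF α (j+2)|)
            < (cfQ α (m+1):ℝ) * (|thetaCF α (j+4)| + |thetaCF α (j+2)|) := by
          apply mul_lt_mul_of_pos_right (by linarith) (by positivity)
        linarith
    have hmem := psi2sFn_le (α := α) (t := ((q:ℤ):ℝ)) hq0 (le_refl _) hrat
    rw [hV] at hmem
    have hψ0 := psi2sFn_nonneg (α := α) ((q:ℤ):ℝ)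
    -- numeric bound : q * (|Θ4| + |Θ2|) ≤ 8
    have hqle : (q:ℝ) ≤ 2 * (cfQ α (j+4) : ℝ) := by
      exact_mod_cast (by omega : q ≤ 2 * cfQ α (j+4))
    have hTle : |thetaCF α (j+4)| + |thetaCF α (j+2)| ≤ 2 * |thetaCF α (j+2)| := by
      have := abs_theta_antitone hα (by omega : j+2 ≤ j+4)
      linarith
    have hq4T : (cfQ α (j+4) : ℝ) * |thetaCF α (j+2)| ≤ 2 := by
      have e4 : (cfQ α (j+4) : ℝ) = (cfQ α (j+3) : ℝ) + (cfQ α (j+2) : ℝ) := by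
        exact_mod_cast hQ4e
      have h1 : (cfQ α (j+2) : ℝ) ≤ (cfQ α (j+3) : ℝ) := by exact_mod_cast hstrict1.le
      nlinarith [abs_theta_pos hα (j+2), cfQ_pos hα (j+1),
        (by exact_mod_cast cfQ_pos hα (j+1) : (1:ℝ) ≤ (cfQ α (j+2):ℝ))]
    nlinarith [mul_le_mul_of_nonneg_left hmem hq0R.le,
      mul_le_mul_of_nonneg_left hTle hq0R.le,
      mul_le_mul_of_nonneg_right hqle (by positivity : (0:ℝ) ≤ |thetaCF α (j+2)|)]
  · -- a ≥ 2 : use (P(j+4)-P(j+3), Q(j+4)-Q(j+3))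
    refine ⟨((cfQ α (j+4) - cfQ α (j+3) : ℤ) : ℝ), ?_, ?_⟩
    · have hgap : cfQ α (j+3) < cfQ α (j+4) - cfQ α (j+3) := by
        rw [hrec4]; nlinarith
      have : (cfQ α (j+3) : ℝ) ≤ ((cfQ α (j+4) - cfQ α (j+3) : ℤ) : ℝ) := by
        exact_mod_cast hgap.le
      linarith
    set q : ℤ := cfQ α (j+4) - cfQ α (j+3) with hq_def
    set p : ℤ := cfP α (j+4) - cfP α (j+3) with hp_def
    have hgap : cfQ α (j+3) < q := by rw [hq_def, hrec4]; nlinarith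
    have hq4 : q < cfQ α (j+4) := by omega
    have hq0 : (1:ℤ) ≤ q := by omega
    have hq0R : (0:ℝ) < (q:ℝ) := by exact_mod_cast (by omega : (0:ℤ) < q)
    have hVeq : (q:ℝ) * α - (p:ℝ) = thetaCF α (j+4) - thetaCF α (j+3) := by
      rw [thetaCF, thetaCF, hq_def, hp_def]; push_cast; ring
    have hV : |(q:ℝ) * α - (p:ℝ)| = |thetaCF α (j+4)| + |thetaCF α (j+3)| := by
      rw [hVeq]; exact theta_diff_abs hα (j+2)
    have hrat : ∀ m : ℕ, (p : ℝ) / (q : ℝ) ≠ (cfNum α m : ℝ) / (cfDen α m : ℝ) := by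
      intro m heq
      obtain ⟨hcross, hval⟩ := ratio_eq_conseq hα (by omega) heq
      rw [hV] at hval
      have hXim : cfXi α m = |thetaCF α (m+1)| := rfl
      have hDenm : (cfDen α m : ℤ) = cfQ α (m+1) := rfl
      rw [hXim] at hval
      rw [show ((cfDen α m : ℤ):ℝ) = ((cfQ α (m+1) : ℤ):ℝ) by rw [hDenm]] at hval
      rcases le_or_gt (m+1) (j+2) with hm | hm
      · have h1 : |thetaCF α (j+2)| ≤ |thetaCF α (m+1)| := abs_theta_antitone hα hm
        have h2 : (cfQ α (m+1) : ℝ) ≤ (cfQ α (j+3) : ℝ) := by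
          exact_mod_cast cfQ_mono hα (by omega : m + 1 ≤ j + 3)
        have h3 : (0:ℝ) < (cfQ α (m+1):ℝ) := by exact_mod_cast cfQ_pos hα m
        have hgapR : (cfQ α (j+3):ℝ) < (q:ℝ) := by exact_mod_cast hgap
        have hA2R : (2:ℝ) ≤ (cfA α (j+3) : ℝ) := by exact_mod_cast hA2
        have k1 : |thetaCF α (j+4)| + |thetaCF α (j+3)| < |thetaCF α (m+1)| := by
          nlinarith [mul_nonneg (show (0:ℝ) ≤ (cfA α (j+3):ℝ) - 2 by linarith) habs3.le]
        have k2 : (cfQ α (m+1):ℝ) * (|thetaCF α (j+4)| + |thetaCF α (j+3)|)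
            < (q:ℝ) * (|thetaCF α (j+4)| + |thetaCF α (j+3)|) := by
          apply mul_lt_mul_of_pos_right (by linarith) (by positivity)
        have k3 : (q:ℝ) * (|thetaCF α (j+4)| + |thetaCF α (j+3)|)
            < (q:ℝ) * |thetaCF α (m+1)| := by
          apply mul_lt_mul_of_pos_left k1 hq0R
        linarith
      rcases le_or_gt (m+1) (j+4) with hm2 | hm2
      · rcases (by omega : m = j + 2 ∨ m = j + 3) with hmeq | hmeq
        · subst hmeq
          have hcross' : p * cfQ α (j+3) = q * cfP α (j+3) := hcross
          have hzero : ((-1:ℤ))^(j+3) = 0 := by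
            rw [hq_def, hp_def] at hcross'
            linear_combination -hcross' - hdet3
          exact neg_one_pow_ne_zero' (j+3) hzero
        · subst hmeq
          have hcross' : p * cfQ α (j+4) = q * cfP α (j+4) := hcross
          have hzero : ((-1:ℤ))^(j+3) = 0 := by
            rw [hq_def, hp_def] at hcross'
            linear_combination -hcross' - hdet3
          exact neg_one_pow_ne_zero' (j+3) hzero
      · have hm4 : j + 5 ≤ m + 1 := by omega
        have h1 : |thetaCF α (m+1)| ≤ |thetaCF α (j+5)| := abs_theta_antitone hα hm4
        have h2 : (cfQ α (j+5) : ℝ) ≤ (cfQ α (m+1) : ℝ) := by exact_mod_cast cfQ_mono hα hm4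
        have hq5R : (q:ℝ) < (cfQ α (j+5):ℝ) := by
          exact_mod_cast (by omega : q < cfQ α (j+5))
        have k1 : |thetaCF α (m+1)| < |thetaCF α (j+4)| + |thetaCF α (j+3)| := by
          have := abs_theta_succ_lt hα (j+4)
          linarith
        have k2 : (q:ℝ) * |thetaCF α (m+1)| < (q:ℝ) * (|thetaCF α (j+4)| + |thetaCF α (j+3)|) :=
          mul_lt_mul_of_pos_left k1 hq0R
        have k3 : (q:ℝ) * (|thetaCF α (j+4)| + |thetaCF α (j+3)|)
            < (cfQ α (m+1):ℝ) * (|thetaCF α (j+4)| + |thetaCF α (j+3)|) := by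
          apply mul_lt_mul_of_pos_right (by linarith) (by positivity)
        linarith
    have hmem := psi2sFn_le (α := α) (t := ((q:ℤ):ℝ)) hq0 (le_refl _) hrat
    rw [hV] at hmem
    have hψ0 := psi2sFn_nonneg (α := α) ((q:ℤ):ℝ)
    have hqle : (q:ℝ) ≤ (cfQ α (j+4) : ℝ) := by exact_mod_cast hq4.le
    -- q*(|Θ4|+|Θ3|) ≤ Q4|Θ3| + Q4|Θ4| ≤ 1 + 1 = 2
    have h1 : (cfQ α (j+4):ℝ) * |thetaCF α (j+3)| ≤ 1 := by nlinarith
    have h2 : (cfQ α (j+4):ℝ) * |thetaCF α (j+4)| ≤ 1 := by nlinarith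
    nlinarith [mul_le_mul_of_nonneg_left hmem hq0R.le,
      mul_le_mul_of_nonneg_right hqle (by positivity : (0:ℝ) ≤ |thetaCF α (j+4)| + |thetaCF α (j+3)|)]
end Star

section Main
variable {α : ℝ}

/-- `2 qₙ` is never a denominator (for n ≥ 2). -/
lemma two_den_ne (hα : Irrational α) (k : ℕ) (m : ℕ) :
    2 * cfDen α (k+2) ≠ cfDen α m := by
  have hpos := cfDen_pos hα (k+2)
  rcases lt_or_ge m (k+3) with hm | hm
  · have h1 : cfDen α m ≤ cfDen α (k+2) := cfDen_mono hα (by omega)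
    omega
  rcases eq_or_lt_of_le hm with hm2 | hm2
  · -- m = k+3
    rw [← hm2]
    have hrec : cfDen α (k+3) = cfA α (k+3) * cfQ α (k+3) + cfQ α (k+2) := rfl
    have hA := cfA_one_le hα (k+2)
    have hstrict : cfQ α (k+2) < cfQ α (k+3) := cfQ_strict hα k
    have hQpos : 1 ≤ cfQ α (k+2) := cfQ_pos hα (k+1)
    have hden : cfDen α (k+2) = cfQ α (k+3) := rfl
    rcases eq_or_lt_of_le hA with hA1 | hA2
    · rw [hrec, ← hA1, hden]
      omega
    · rw [hrec, hden]
      nlinarith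
  · -- m ≥ k+4
    have h1 : cfDen α (k+4) ≤ cfDen α m := cfDen_mono hα (by omega)
    have hrec : cfDen α (k+4) = cfA α (k+4) * cfQ α (k+4) + cfQ α (k+3) := rfl
    have hA := cfA_one_le hα (k+3)
    have hstrict : cfQ α (k+3) < cfQ α (k+4) := cfQ_strict hα (k+1)
    have hQpos : 1 ≤ cfQ α (k+3) := cfQ_pos hα (k+2)
    have hden : cfDen α (k+2) = cfQ α (k+3) := rfl
    rw [hden]
    nlinarith

lemma freq_small (hα : Irrational α) : ∃ᶠ t : ℝ in Filter.atTop, t * psi2Fn α t ≤ 4 := by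
  have htend : Filter.Tendsto (fun n : ℕ => 2 * (cfDen α n : ℝ)) Filter.atTop Filter.atTop :=
    (tendsto_den hα).const_mul_atTop two_pos
  apply htend.frequently
  apply Filter.Eventually.frequently
  rw [Filter.eventually_atTop]
  refine ⟨2, fun n hn => ?_⟩
  obtain ⟨k, rfl⟩ : ∃ k, n = k + 2 := ⟨n - 2, by omega⟩
  have hq1 : (1:ℤ) ≤ 2 * cfDen α (k+2) := by have := cfDen_pos hα (k+2); omega
  have hmem : psi2Fn α (2 * (cfDen α (k+2) : ℝ)) ≤
      |((2 * cfDen α (k+2) : ℤ) : ℝ) * α - ((2 * cfNum α (k+2) : ℤ) : ℝ)| := by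
    apply psi2Fn_le hq1 (by push_cast; linarith)
    intro m hm
    exact two_den_ne hα k m hm.2
  have hval : |((2 * cfDen α (k+2) : ℤ) : ℝ) * α - ((2 * cfNum α (k+2) : ℤ) : ℝ)|
      = 2 * cfXi α (k+2) := by
    rw [cfXi]
    push_cast
    rw [show (2:ℝ) * (cfDen α (k+2):ℝ) * α - 2 * (cfNum α (k+2):ℝ)
        = 2 * ((cfDen α (k+2):ℝ) * α - (cfNum α (k+2):ℝ)) by ring, abs_mul]
    norm_num
  rw [hval] at hmem
  have hb := den_xi_le_one hα (k+2)
  have hd0 : (0:ℝ) < (cfDen α (k+2) : ℝ) := by exact_mod_cast cfDen_pos hα (k+2)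
  have hψ := psi2Fn_nonneg (α := α) (2 * (cfDen α (k+2) : ℝ))
  nlinarith

lemma cobounded_psi2 (hα : Irrational α) :
    Filter.IsCoboundedUnder (· ≥ ·) Filter.atTop (fun t : ℝ => t * psi2Fn α t) :=
  Filter.IsCoboundedUnder.of_frequently_le (freq_small hα)

lemma bounded_below_t_psi {ψ : ℝ → ℝ} (hψ : ∀ t, 0 ≤ ψ t) :
    Filter.IsBoundedUnder (· ≥ ·) Filter.atTop (fun t : ℝ => t * ψ t) := by
  refine ⟨0, ?_⟩
  rw [Filter.eventually_map]
  filter_upwards [Filter.eventually_ge_atTop (0:ℝ)] with t ht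
  exact mul_nonneg ht (hψ t)

lemma lam_le_L (hα : Irrational α) : lamOf α ≤ Lval α := by
  apply le_of_forall_gt_imp_ge_of_dense
  intro c hc
  have hcob : Filter.IsCoboundedUnder (· ≥ ·) Filter.atTop
      (fun n : ℕ => (cfDen α n : ℝ) * cfXi α n) :=
    Filter.IsCoboundedUnder.of_frequently_le
      (Filter.Eventually.frequently (Filter.Eventually.of_forall (den_xi_le_one hα)))
  have hfreqn : ∃ᶠ n : ℕ in Filter.atTop, (cfDen α n : ℝ) * cfXi α n < c :=
    Filter.frequently_lt_of_liminf_lt hcob hc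
  have hfreq : ∃ᶠ t : ℝ in Filter.atTop, t * psiFn α t ≤ c := by
    apply (tendsto_den hα).frequently
    apply hfreqn.mono
    intro n hn
    have h1 : psiFn α ((cfDen α n : ℝ)) ≤ cfXi α n := by
      have := psiFn_le (α := α) (t := ((cfDen α n : ℝ)))
        (p := cfNum α n) (q := cfDen α n) (cfDen_pos hα n) (le_refl _)
      rw [cfXi]
      exact this
    have hd0 : (0:ℝ) < (cfDen α n : ℝ) := by exact_mod_cast cfDen_pos hα n
    nlinarith [psiFn_nonneg (α := α) ((cfDen α n : ℝ))]
  exact Filter.liminf_le_of_frequently_le hfreq (bounded_below_t_psi psiFn_nonneg)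

lemma k_ge_2L (hα : Irrational α) : 2 * Lval α ≤ kOf α := by
  apply le_of_forall_lt_imp_le_of_dense
  intro b hb
  rcases le_or_gt b 0 with hb0 | hb0
  · have h0 : (0:ℝ) ≤ kOf α := by
      apply Filter.le_liminf_of_le (cobounded_psi2 hα)
      filter_upwards [Filter.eventually_ge_atTop (0:ℝ)] with t ht
      exact mul_nonneg ht (psi2Fn_nonneg t)
    linarith
  -- b > 0
  have hb2 : b / 2 < Lval α := by linarith
  have hbdd : Filter.IsBoundedUnder (· ≥ ·) Filter.atTop
      (fun n : ℕ => (cfDen α n : ℝ) * cfXi α n) :=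
    Filter.isBoundedUnder_of ⟨0, fun n => mul_nonneg
      (by exact_mod_cast cfQ_nonneg hα (n+1)) (cfXi_nonneg n)⟩
  have hev := Filter.eventually_lt_of_lt_liminf hb2 hbdd
  rw [Filter.eventually_atTop] at hev
  obtain ⟨N, hN⟩ := hev
  obtain ⟨δ, hδ0, hδ⟩ := exists_delta hα (cfDen α (N+2))
  apply Filter.le_liminf_of_le (cobounded_psi2 hα)
  filter_upwards [Filter.eventually_ge_atTop (max 1 (b/δ))] with t ht
  have ht1 : (1:ℝ) ≤ t := le_trans (le_max_left _ _) ht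
  have ht0 : (0:ℝ) < t := by linarith
  have htδ : b / δ ≤ t := le_trans (le_max_right _ _) ht
  have hbtδ : b ≤ t * δ := by
    rw [div_le_iff₀ hδ0] at htδ
    linarith
  have hlow : ∀ x ∈ {x : ℝ | ∃ p q : ℤ, 1 ≤ q ∧ (q : ℝ) ≤ t ∧
      (∀ n : ℕ, ¬(p = cfNum α n ∧ q = cfDen α n)) ∧ x = |(q : ℝ) * α - (p : ℝ)|},
      b / t ≤ x := by
    rintro x ⟨p, q, hq1, hqt, hex, rfl⟩
    rcases le_or_gt q (cfDen α (N+2)) with hsmall | hbig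
    · have := hδ p q hq1 hsmall
      rw [div_le_iff₀ ht0]
      nlinarith
    · obtain ⟨Nq, hNq1, hNq2⟩ := exists_level hα q hq1
      have hNqge : N + 2 ≤ Nq := by
        by_contra hcon
        push_neg at hcon
        have : cfDen α (Nq+1) ≤ cfDen α (N+2) := cfDen_mono hα (by omega)
        omega
      obtain ⟨k, rfl⟩ : ∃ k, Nq = k + 2 := ⟨Nq - 2, by omega⟩
      have hcore := core hα k p q hNq1 hNq2 (hex (k+2))
      have hm1 := hN (k+1) (by omega)
      have hm2 := hN (k+2) (by omega)
      have hm3 := hN (k+3) (by omega)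
      have hminb : b ≤ 2 * min ((cfDen α (k+1) : ℝ) * cfXi α (k+1))
          (min ((cfDen α (k+2) : ℝ) * cfXi α (k+2)) ((cfDen α (k+3) : ℝ) * cfXi α (k+3))) := by
        have : b/2 < min ((cfDen α (k+1) : ℝ) * cfXi α (k+1))
            (min ((cfDen α (k+2) : ℝ) * cfXi α (k+2)) ((cfDen α (k+3) : ℝ) * cfXi α (k+3))) := by
          rw [lt_min_iff, lt_min_iff]
          exact ⟨hm1, hm2, hm3⟩
        linarith
      have hqb : b ≤ (q:ℝ) * |(q : ℝ) * α - (p : ℝ)| := le_trans hminb hcore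
      have hq0 : (0:ℝ) < (q:ℝ) := by exact_mod_cast hq1
      rw [div_le_iff₀ ht0]
      calc b ≤ (q:ℝ) * |(q : ℝ) * α - (p : ℝ)| := hqb
      _ ≤ t * |(q : ℝ) * α - (p : ℝ)| := by
          apply mul_le_mul_of_nonneg_right (by linarith) (abs_nonneg _)
      _ = |(q : ℝ) * α - (p : ℝ)| * t := by ring
  have hinf : b / t ≤ psi2Fn α t := le_csInf (psi2set_nonempty hα ht1) hlow
  rw [div_le_iff₀ ht0] at hinf
  linarith [hinf]

lemma k_le_ks (hα : Irrational α) : kOf α ≤ ksOf α := by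
  have hev : ∀ᶠ t : ℝ in Filter.atTop, t * psi2Fn α t ≤ t * psi2sFn α t := by
    filter_upwards [Filter.eventually_ge_atTop (1:ℝ)] with t ht
    exact mul_le_mul_of_nonneg_left (psi2_le_psi2s hα ht) (by linarith)
  exact Filter.liminf_le_liminf hev (bounded_below_t_psi psi2Fn_nonneg)
    (Filter.IsCoboundedUnder.of_frequently_le (freq_small_star hα))

end Main


/-- `α` and `β` are equivalent: `β = (aα+b)/(cα+d)` with `a,b,c,d ∈ ℤ`, `|ad − bc| = 1`. -/
def CFEquiv (α β : ℝ) : Prop :=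
  ∃ a b c d : ℤ, |a * d - b * c| = 1 ∧ β = ((a : ℝ) * α + (b : ℝ)) / ((c : ℝ) * α + (d : ℝ))

/-- The spectrum `𝕃₂ = {𝔨(α) : α irrational}`. -/
def L2 : Set ℝ := {x : ℝ | ∃ α : ℝ, Irrational α ∧ kOf α = x}

/-- The spectrum `𝕃₂* = {𝔨*(α) : α irrational}`. -/
def L2s : Set ℝ := {x : ℝ | ∃ α : ℝ, Irrational α ∧ ksOf α = x}

/-- `𝔔(α)`: the set of positive integers at which `ψ_α^[2]` is discontinuous. -/
def QSet (α : ℝ) : Set ℤ := {m : ℤ | 0 < m ∧ ¬ ContinuousAt (psi2Fn α) (m : ℝ)}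

/-- `𝔛(α)`: the set of positive integers at which `ψ_α^[2]*` is discontinuous. -/
def XSet (α : ℝ) : Set ℤ := {m : ℤ | 0 < m ∧ ¬ ContinuousAt (psi2sFn α) (m : ℝ)}

/-- The members of the list `l` are successive elements of `S`: they belong to `S`,
are listed in increasing order, and no element of `S` lies strictly between
consecutive listed ones. -/
def SuccessiveIn (S : Set ℤ) (l : List ℤ) : Prop :=
  (∀ x ∈ l, x ∈ S) ∧ l.Chain' (fun x y => x < y ∧ ∀ z ∈ S, ¬(x < z ∧ z < y))

/-- `κ¹ₙ = (q_{n-2} + q_{n-1})(ξ_{n-2} − ξ_{n-1})`. -/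
noncomputable def kap1 (α : ℝ) (n : ℕ) : ℝ :=
  ((cfDen α (n - 2) + cfDen α (n - 1) : ℤ) : ℝ) * (cfXi α (n - 2) - cfXi α (n - 1))

/-- `κ²ₙ = (qₙ − q_{n-1})(ξ_{n-1} + ξₙ)`. -/
noncomputable def kap2 (α : ℝ) (n : ℕ) : ℝ :=
  ((cfDen α n - cfDen α (n - 1) : ℤ) : ℝ) * (cfXi α (n - 1) + cfXi α n)

/-- `κ³ₙ = (2q_{n-2} + q_{n-1})(2ξ_{n-2} − ξ_{n-1})`. -/
noncomputable def kap3 (α : ℝ) (n : ℕ) : ℝ :=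
  ((2 * cfDen α (n - 2) + cfDen α (n - 1) : ℤ) : ℝ) * (2 * cfXi α (n - 2) - cfXi α (n - 1))

/-- `κ⁴ₙ = 4 q_{n-1} ξ_{n-1}`. -/
noncomputable def kap4 (α : ℝ) (n : ℕ) : ℝ :=
  ((4 * cfDen α (n - 1) : ℤ) : ℝ) * cfXi α (n - 1)

/-- For every irrational real number `α` one has `𝔨*(α) ≥ 𝔨(α) ≥ 2·λ(α)`. -/
theorem stmt0 (α : ℝ) (hα : Irrational α) :
    2 * lamOf α ≤ kOf α ∧ kOf α ≤ ksOf α := by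
  constructor
  · have h1 := lam_le_L hα
    have h2 := k_ge_2L hα
    linarith
  · exact k_le_ks hα
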